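/- arXiv:1906.04148 — 5 statements merged into one kernel-verified Lean document; each statement's English description precedes it below -/
import Mathlib

section
/- If q < 1/2 and p(0) < 1, then the level winning probabilities oscillate: for every 0 ≤ h ≤ N−1, if N−h is odd then p_h < p_{h+1}, and if N−h is even then p_h > p_{h+1}. Equivalently, p_{N−2m} > p_{N−2m+1} for all integers m with 1 ≤ 2m ≤ N, and p_{N−2m−1} < p_{N−2m} for all integers m with 0 ≤ 2m+1 ≤ N. -/
theorem stmt_5 (q : ℝ) (hq0 : 0 ≤ q) (hq1 : q ≤ 1)
    (p : ℕ → ℝ) (hp : ∀ k, 0 ≤ p k) (hpsum : HasSum p 1)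
    (F : ℝ → ℝ)
    (hF : ∀ x : ℝ, F x = ∑' k : ℕ, (q * x + (1 - q) * (1 - x)) ^ k * p k)
    (N : ℕ) (hN : 1 ≤ N)
    (P : ℕ → ℝ) (hPN : P N = 1) (hPrec : ∀ h, h < N → P h = F (P (h + 1)))
    (hq : q < 1 / 2) (hp0 : p 0 < 1) :
    (∀ h, h < N →
      (Odd (N - h) → P h < P (h + 1)) ∧ (Even (N - h) → P h > P (h + 1))) ∧
    (∀ m : ℕ, 1 ≤ 2 * m → 2 * m ≤ N → P (N - 2 * m) > P (N - 2 * m + 1)) ∧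
    (∀ m : ℕ, 2 * m + 1 ≤ N → P (N - (2 * m + 1)) < P (N - 2 * m)) := by
  have hpsummable : Summable p := hpsum.summable
  have htsum : ∑' k, p k = 1 := hpsum.tsum_eq
  -- there exists k0 ≥ 1 with p k0 > 0
  obtain ⟨k0, hk0, hpk0⟩ : ∃ k, 1 ≤ k ∧ 0 < p k := by
    by_contra h
    push_neg at h
    have hz : ∀ k, k ≠ 0 → p k = 0 := by
      intro k hk
      have h1 := h k (Nat.one_le_iff_ne_zero.mpr hk)
      have := hp k
      linarith
    have : ∑' k, p k = p 0 := tsum_eq_single 0 (fun b hb => hz b hb)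
    rw [htsum] at this
    linarith
  -- summability of the series defining F
  have hsumm : ∀ s : ℝ, 0 ≤ s → s ≤ 1 → Summable (fun k => s ^ k * p k) := by
    intro s hs0 hs1
    refine Summable.of_nonneg_of_le (fun k => mul_nonneg (pow_nonneg hs0 k) (hp k)) (fun k => ?_) hpsummable
    have : s ^ k ≤ 1 := pow_le_one₀ hs0 hs1
    nlinarith [hp k]
  -- the "slope" map
  have hsmem : ∀ x : ℝ, 0 ≤ x → x ≤ 1 →
      0 ≤ q * x + (1 - q) * (1 - x) ∧ q * x + (1 - q) * (1 - x) ≤ 1 := by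
    intro x hx0 hx1
    constructor <;> nlinarith
  -- F maps [0,1] into [0,1]
  have hFmem : ∀ x : ℝ, 0 ≤ x → x ≤ 1 → 0 ≤ F x ∧ F x ≤ 1 := by
    intro x hx0 hx1
    obtain ⟨hs0, hs1⟩ := hsmem x hx0 hx1
    rw [hF x]
    constructor
    · exact tsum_nonneg (fun k => mul_nonneg (pow_nonneg hs0 k) (hp k))
    · calc ∑' k, (q * x + (1 - q) * (1 - x)) ^ k * p k
          ≤ ∑' k, p k := by
            refine Summable.tsum_le_tsum (fun k => ?_) (hsumm _ hs0 hs1) hpsummable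
            have : (q * x + (1 - q) * (1 - x)) ^ k ≤ 1 := pow_le_one₀ hs0 hs1
            nlinarith [hp k]
        _ = 1 := htsum
  -- F is strictly antitone on [0,1]
  have hanti : ∀ x y : ℝ, 0 ≤ x → x < y → y ≤ 1 → F y < F x := by
    intro x y hx0 hxy hy1
    have hx1 : x ≤ 1 := le_of_lt (lt_of_lt_of_le hxy hy1)
    have hy0 : 0 ≤ y := le_trans hx0 (le_of_lt hxy)
    obtain ⟨hsx0, hsx1⟩ := hsmem x hx0 hx1
    obtain ⟨hsy0, hsy1⟩ := hsmem y hy0 hy1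
    have hlt : q * y + (1 - q) * (1 - y) < q * x + (1 - q) * (1 - x) := by nlinarith
    rw [hF x, hF y]
    refine Summable.tsum_lt_tsum (i := k0) (fun k => ?_) ?_ (hsumm _ hsy0 hsy1) (hsumm _ hsx0 hsx1)
    · have := pow_le_pow_left₀ hsy0 (le_of_lt hlt) k
      nlinarith [hp k]
    · have hk0ne : k0 ≠ 0 := Nat.one_le_iff_ne_zero.mp hk0
      have := pow_lt_pow_left₀ hlt hsy0 hk0ne
      nlinarith
  -- F 1 < 1
  have hF1 : F 1 < 1 := by
    rw [hF 1]
    have hs : q * 1 + (1 - q) * (1 - 1) = q := by ring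
    rw [hs]
    calc ∑' k, q ^ k * p k < ∑' k, p k := by
          refine Summable.tsum_lt_tsum (i := k0) (fun k => ?_) ?_ (hsumm q hq0 hq1) hpsummable
          · have : q ^ k ≤ 1 := pow_le_one₀ hq0 hq1
            nlinarith [hp k]
          · have hk0ne : k0 ≠ 0 := Nat.one_le_iff_ne_zero.mp hk0
            have : q ^ k0 < 1 := pow_lt_one₀ hq0 (by linarith) hk0ne
            nlinarith
      _ = 1 := htsum
  -- P h ∈ [0,1] for h ≤ N
  have hmem : ∀ d h : ℕ, h + d = N → 0 ≤ P h ∧ P h ≤ 1 := by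
    intro d
    induction d with
    | zero => intro h hh; simp at hh; subst hh; rw [hPN]; norm_num
    | succ d ih =>
      intro h hh
      have hhN : h < N := by omega
      obtain ⟨h0, h1⟩ := ih (h + 1) (by omega)
      rw [hPrec h hhN]
      exact hFmem _ h0 h1
  -- main oscillation claim, by induction on d = N - h
  have key : ∀ d : ℕ, 1 ≤ d → d ≤ N →
      (Odd d → P (N - d) < P (N - d + 1)) ∧ (Even d → P (N - d) > P (N - d + 1)) := by
    intro d
    induction d with
    | zero => intro h; omega
    | succ d ih =>
      intro _ hdN
      rcases Nat.eq_zero_or_pos d with hd0 | hd1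
      · subst hd0
        constructor
        · intro _
          have heq : N - 1 + 1 = N := by omega
          rw [heq, hPN, hPrec (N - 1) (by omega), heq, hPN]
          exact hF1
        · intro he
          exact absurd he (by decide)
      · have hdN' : d ≤ N := by omega
        obtain ⟨ihodd, iheven⟩ := ih hd1 hdN'
        have heq1 : N - (d + 1) + 1 = N - d := by omega
        have hrec : P (N - (d + 1)) = F (P (N - d)) := by
          rw [hPrec (N - (d + 1)) (by omega), heq1]
        have hrec2 : P (N - d) = F (P (N - d + 1)) := by
          rw [hPrec (N - d) (by omega)]
        obtain ⟨ha0, ha1⟩ := hmem d (N - d) (by omega)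
        obtain ⟨hb0, hb1⟩ := hmem (d - 1) (N - d + 1) (by omega)
        constructor
        · intro hodd
          have hde : Even d := by
            rcases hodd with ⟨j, hj⟩
            exact ⟨j, by omega⟩
          have hlt : P (N - d) > P (N - d + 1) := iheven hde
          rw [hrec, heq1]
          show F (P (N - d)) < P (N - d)
          conv_rhs => rw [hrec2]
          exact hanti _ _ hb0 hlt ha1
        · intro heven
          have hdo : Odd d := by
            rcases heven with ⟨j, hj⟩
            exact ⟨j - 1, by omega⟩
          have hlt : P (N - d) < P (N - d + 1) := ihodd hdo
          rw [hrec, heq1]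
          show P (N - d) < F (P (N - d))
          conv_lhs => rw [hrec2]
          exact hanti _ _ ha0 hlt hb1
  refine ⟨?_, ?_, ?_⟩
  · intro h hh
    have hd1 : 1 ≤ N - h := by omega
    have hd2 : N - h ≤ N := by omega
    obtain ⟨ko, ke⟩ := key (N - h) hd1 hd2
    have heq : N - (N - h) = h := by omega
    rw [heq] at ko ke
    exact ⟨ko, ke⟩
  · intro m hm1 hm2
    exact (key (2 * m) hm1 hm2).2 (even_two_mul m)
  · intro m hm
    have := (key (2 * m + 1) (by omega) hm).1 ⟨m, by ring⟩
    have heq : N - (2 * m + 1) + 1 = N - 2 * m := by omega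
    rwa [heq] at this
end

section
/- If 1/2 < q < 1 and p(0) < 1, then the level winning probabilities strictly increase with the level: p_h < p_{h+1} for every 0 ≤ h ≤ N−1. -/
theorem stmt_6 (q : ℝ) (hq0 : 0 ≤ q) (hq1 : q ≤ 1)
    (p : ℕ → ℝ) (hp : ∀ k, 0 ≤ p k) (hpsum : HasSum p 1)
    (F : ℝ → ℝ)
    (hF : ∀ x : ℝ, F x = ∑' k : ℕ, (q * x + (1 - q) * (1 - x)) ^ k * p k)
    (N : ℕ) (hN : 1 ≤ N)
    (P : ℕ → ℝ) (hPN : P N = 1) (hPrec : ∀ h, h < N → P h = F (P (h + 1)))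
    (hqlo : 1 / 2 < q) (hqhi : q < 1) (hp0 : p 0 < 1) :
    ∀ h, h < N → P h < P (h + 1) := by
  -- there is some k₀ ≠ 0 with p k₀ > 0
  obtain ⟨k₀, hk₀, hpk₀⟩ : ∃ k, k ≠ 0 ∧ 0 < p k := by
    by_contra hcon
    push_neg at hcon
    have hall : ∀ k, k ≠ 0 → p k = 0 := fun k hk => le_antisymm (hcon k hk) (hp k)
    have h1 : (∑' k, p k) = p 0 := tsum_eq_single 0 (fun k hk => hall k hk)
    rw [hpsum.tsum_eq] at h1
    linarith
  have hsummable : ∀ t : ℝ, 0 ≤ t → t ≤ 1 → Summable (fun k => t ^ k * p k) := by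
    intro t ht0 ht1
    refine Summable.of_nonneg_of_le (fun k => mul_nonneg (pow_nonneg ht0 k) (hp k))
      (fun k => ?_) hpsum.summable
    calc t ^ k * p k ≤ 1 * p k :=
          mul_le_mul_of_nonneg_right (pow_le_one₀ ht0 ht1) (hp k)
      _ = p k := one_mul _
  have hg_nonneg : ∀ t : ℝ, 0 ≤ t → 0 ≤ (∑' k, t ^ k * p k) := fun t ht =>
    tsum_nonneg (fun k => mul_nonneg (pow_nonneg ht k) (hp k))
  have hg_le_one : ∀ t : ℝ, 0 ≤ t → t ≤ 1 → (∑' k, t ^ k * p k) ≤ 1 := by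
    intro t ht0 ht1
    calc (∑' k, t ^ k * p k) ≤ ∑' k, p k := by
          refine Summable.tsum_le_tsum (fun k => ?_) (hsummable t ht0 ht1) hpsum.summable
          calc t ^ k * p k ≤ 1 * p k :=
                mul_le_mul_of_nonneg_right (pow_le_one₀ ht0 ht1) (hp k)
            _ = p k := one_mul _
      _ = 1 := hpsum.tsum_eq
  have hgmono : ∀ s t : ℝ, 0 ≤ s → s < t → t ≤ 1 →
      (∑' k, s ^ k * p k) < (∑' k, t ^ k * p k) := by
    intro s t hs hst ht
    refine Summable.tsum_lt_tsum (i := k₀) (fun k =>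
        mul_le_mul_of_nonneg_right (pow_le_pow_left₀ hs hst.le k) (hp k))
      (mul_lt_mul_of_pos_right (pow_lt_pow_left₀ hst hs hk₀) hpk₀)
      (hsummable s hs (by linarith)) (hsummable t (by linarith) ht)
  have hlin0 : ∀ x : ℝ, 0 ≤ x → 0 ≤ q * x + (1 - q) * (1 - x) := by
    intro x hx; nlinarith
  have hlin1 : ∀ x : ℝ, x ≤ 1 → q * x + (1 - q) * (1 - x) ≤ 1 := by
    intro x hx; nlinarith
  have hFmono : ∀ a b : ℝ, 0 ≤ a → a < b → b ≤ 1 → F a < F b := by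
    intro a b ha hab hb
    rw [hF a, hF b]
    exact hgmono _ _ (hlin0 a ha) (by nlinarith) (hlin1 b hb)
  -- bounds
  have hB : ∀ d h, h + d = N → 0 ≤ P h ∧ P h ≤ 1 := by
    intro d
    induction d with
    | zero =>
      intro h hh
      have : h = N := by omega
      rw [this, hPN]; norm_num
    | succ d ih =>
      intro h hh
      have hlt : h < N := by omega
      have ih' := ih (h + 1) (by omega)
      rw [hPrec h hlt, hF]
      exact ⟨hg_nonneg _ (hlin0 _ ih'.1), hg_le_one _ (hlin0 _ ih'.1) (hlin1 _ ih'.2)⟩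
  -- strict increase by downward induction
  have hC : ∀ d h, h + d + 1 = N → P h < P (h + 1) := by
    intro d
    induction d with
    | zero =>
      intro h hh
      have hh1 : h + 1 = N := by omega
      rw [hPrec h (by omega), hh1, hPN, hF]
      have h1 : q * 1 + (1 - q) * (1 - 1) = q := by ring
      rw [h1]
      calc (∑' k, q ^ k * p k) < ∑' k, (1 : ℝ) ^ k * p k := hgmono q 1 hq0 hqhi le_rfl
        _ = ∑' k, p k := by simp
        _ = 1 := hpsum.tsum_eq
    | succ d ih =>
      intro h hh
      have ih' := ih (h + 1) (by omega)
      have hb1 := hB (d + 1) (h + 1) (by omega)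
      have hb2 := hB d (h + 2) (by omega)

      have key := hFmono (P (h + 1)) (P (h + 2)) hb1.1 ih' hb2.2
      rw [← hPrec h (by omega), ← hPrec (h + 1) (by omega)] at key
      exact key
  intro h hlt
  exact hC (N - h - 1) h (by omega)
end

section
/- If q ≥ 1/2, then the level winning probabilities are monotone nondecreasing in the level: p_h ≤ p_{h+1} for every 0 ≤ h ≤ N−1. -/
theorem stmt_7 (q : ℝ) (hq0 : 0 ≤ q) (hq1 : q ≤ 1)
    (p : ℕ → ℝ) (hp : ∀ k, 0 ≤ p k) (hpsum : HasSum p 1)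
    (F : ℝ → ℝ)
    (hF : ∀ x : ℝ, F x = ∑' k : ℕ, (q * x + (1 - q) * (1 - x)) ^ k * p k)
    (N : ℕ) (hN : 1 ≤ N)
    (P : ℕ → ℝ) (hPN : P N = 1) (hPrec : ∀ h, h < N → P h = F (P (h + 1)))
    (hq : 1 / 2 ≤ q) :
    ∀ h, h < N → P h ≤ P (h + 1) := by
  have hSump : Summable p := hpsum.summable
  have hg0 : ∀ x : ℝ, 0 ≤ x → x ≤ 1 → 0 ≤ q * x + (1 - q) * (1 - x) := by
    intro x hx0 hx1; nlinarith
  have hg1 : ∀ x : ℝ, 0 ≤ x → x ≤ 1 → q * x + (1 - q) * (1 - x) ≤ 1 := by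
    intro x hx0 hx1; nlinarith
  have hsummable : ∀ y : ℝ, 0 ≤ y → y ≤ 1 → Summable (fun k : ℕ => y ^ k * p k) := by
    intro y hy0 hy1
    apply Summable.of_nonneg_of_le (fun k => mul_nonneg (pow_nonneg hy0 k) (hp k))
      (fun k => ?_) hSump
    calc y ^ k * p k ≤ 1 * p k := by
          apply mul_le_mul_of_nonneg_right (pow_le_one₀ hy0 hy1) (hp k)
      _ = p k := one_mul _
  -- F maps [0,1] to [0,1]
  have hF01 : ∀ x : ℝ, 0 ≤ x → x ≤ 1 → 0 ≤ F x ∧ F x ≤ 1 := by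
    intro x hx0 hx1
    set y := q * x + (1 - q) * (1 - x) with hy
    have hy0 := hg0 x hx0 hx1
    have hy1 := hg1 x hx0 hx1
    rw [hF]
    constructor
    · exact tsum_nonneg fun k => mul_nonneg (pow_nonneg hy0 k) (hp k)
    · calc (∑' k : ℕ, y ^ k * p k) ≤ ∑' k : ℕ, p k := by
            apply Summable.tsum_le_tsum (fun k => ?_) (hsummable y hy0 hy1) hSump
            calc y ^ k * p k ≤ 1 * p k :=
                  mul_le_mul_of_nonneg_right (pow_le_one₀ hy0 hy1) (hp k)
              _ = p k := one_mul _
        _ = 1 := hpsum.tsum_eq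
  -- F is monotone on [0,1]
  have hFmono : ∀ x z : ℝ, 0 ≤ x → z ≤ 1 → x ≤ z → F x ≤ F z := by
    intro x z hx0 hz1 hxz
    have hx1 : x ≤ 1 := le_trans hxz hz1
    have hz0 : 0 ≤ z := le_trans hx0 hxz
    rw [hF, hF]
    have hgx0 := hg0 x hx0 hx1
    have hgz0 := hg0 z hz0 hz1
    have hgle : q * x + (1 - q) * (1 - x) ≤ q * z + (1 - q) * (1 - z) := by nlinarith
    apply Summable.tsum_le_tsum (fun k => ?_) (hsummable _ hgx0 (hg1 x hx0 hx1))
      (hsummable _ hgz0 (hg1 z hz0 hz1))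
    exact mul_le_mul_of_nonneg_right (pow_le_pow_left₀ hgx0 hgle k) (hp k)
  -- P h ∈ [0,1] for all h ≤ N, by downward induction
  have hP01 : ∀ d h : ℕ, h + d = N → 0 ≤ P h ∧ P h ≤ 1 := by
    intro d
    induction d with
    | zero => intro h hh; simp at hh; subst hh; rw [hPN]; exact ⟨zero_le_one, le_refl 1⟩
    | succ d ih =>
      intro h hh
      have hhN : h < N := by omega
      have h1 : (h + 1) + d = N := by omega
      obtain ⟨ih0, ih1⟩ := ih (h + 1) h1
      rw [hPrec h hhN]
      exact hF01 _ ih0 ih1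
  -- main downward induction
  have key : ∀ d h : ℕ, h + 1 + d = N → P h ≤ P (h + 1) := by
    intro d
    induction d with
    | zero =>
      intro h hh
      simp at hh
      have hhN : h < N := by omega
      have : h + 1 = N := hh
      rw [hPrec h hhN, this, hPN]
      exact (hF01 1 zero_le_one le_rfl).2
    | succ d ih =>
      intro h hh
      have hhN : h < N := by omega
      have h1 : (h + 1) + 1 + d = N := by omega
      have ihle := ih (h + 1) h1
      obtain ⟨h10, _⟩ := hP01 (d + 1) (h + 1) (by omega)
      obtain ⟨_, h21⟩ := hP01 d (h + 2) (by omega)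
      rw [hPrec (h + 1) (by omega), hPrec h hhN]
      exact hFmono _ _ h10 h21 ihle
  intro h hh
  exact key (N - 1 - h) h (by omega)
end

section
/- Suppose q < 1/2 and p(0) < 1, and let 0 ≤ h ≤ N−2. If p_{h+2} > p_{h+1} then p_h > p_{h+1}, and if p_{h+2} < p_{h+1} then p_h < p_{h+1}. -/
theorem stmt_8 (q : ℝ) (hq0 : 0 ≤ q) (hq1 : q ≤ 1)
    (p : ℕ → ℝ) (hp : ∀ k, 0 ≤ p k) (hpsum : HasSum p 1)
    (F : ℝ → ℝ)
    (hF : ∀ x : ℝ, F x = ∑' k : ℕ, (q * x + (1 - q) * (1 - x)) ^ k * p k)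
    (N : ℕ) (hN : 1 ≤ N)
    (P : ℕ → ℝ) (hPN : P N = 1) (hPrec : ∀ h, h < N → P h = F (P (h + 1)))
    (hq : q < 1 / 2) (hp0 : p 0 < 1)
    (h : ℕ) (hh : h + 2 ≤ N) :
    (P (h + 2) > P (h + 1) → P h > P (h + 1)) ∧
    (P (h + 2) < P (h + 1) → P h < P (h + 1)) := by
  set g : ℝ → ℝ := fun x => q * x + (1 - q) * (1 - x) with hg
  -- g maps [0,1] to [0,1]
  have hg01 : ∀ x : ℝ, 0 ≤ x → x ≤ 1 → 0 ≤ g x ∧ g x ≤ 1 := by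
    intro x hx0 hx1
    constructor <;> simp only [hg] <;> nlinarith
  -- summability
  have hsummable : Summable p := hpsum.summable
  have hsum : ∀ x : ℝ, 0 ≤ x → x ≤ 1 →
      Summable (fun k : ℕ => (g x) ^ k * p k) := by
    intro x hx0 hx1
    obtain ⟨h0, h1⟩ := hg01 x hx0 hx1
    apply Summable.of_nonneg_of_le
    · intro k; exact mul_nonneg (pow_nonneg h0 k) (hp k)
    · intro k
      calc (g x) ^ k * p k ≤ 1 * p k := by
            apply mul_le_mul_of_nonneg_right _ (hp k)
            exact pow_le_one₀ h0 h1
        _ = p k := one_mul _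
    · exact hsummable
  -- F maps [0,1] to [0,1]
  have hF01 : ∀ x : ℝ, 0 ≤ x → x ≤ 1 → 0 ≤ F x ∧ F x ≤ 1 := by
    intro x hx0 hx1
    obtain ⟨h0, h1⟩ := hg01 x hx0 hx1
    rw [hF]
    constructor
    · apply tsum_nonneg
      intro k; exact mul_nonneg (pow_nonneg h0 k) (hp k)
    · have := hpsum.tsum_eq
      calc (∑' k : ℕ, (g x) ^ k * p k) ≤ ∑' k : ℕ, p k := by
            apply Summable.tsum_le_tsum _ (hsum x hx0 hx1) hsummable
            intro k
            calc (g x) ^ k * p k ≤ 1 * p k := by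
                  apply mul_le_mul_of_nonneg_right _ (hp k)
                  exact pow_le_one₀ h0 h1
              _ = p k := one_mul _
        _ = 1 := this
  -- P i ∈ [0,1] for i ≤ N
  have hP01 : ∀ d : ℕ, d ≤ N → 0 ≤ P (N - d) ∧ P (N - d) ≤ 1 := by
    intro d
    induction d with
    | zero => intro _; simp [hPN]
    | succ d ih =>
      intro hd
      have hd' : d ≤ N := le_of_lt (Nat.lt_of_succ_le hd)
      have hlt : N - (d + 1) < N := by omega
      have heq : N - (d + 1) + 1 = N - d := by omega
      have := hPrec (N - (d + 1)) hlt
      rw [heq] at this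
      obtain ⟨ha, hb⟩ := ih hd'
      rw [this]
      exact hF01 _ ha hb
  have hPmem : ∀ i : ℕ, i ≤ N → 0 ≤ P i ∧ P i ≤ 1 := by
    intro i hi
    have : i = N - (N - i) := by omega
    rw [this]
    exact hP01 (N - i) (by omega)
  -- existence of k0 ≥ 1 with p k0 > 0
  have hk0 : ∃ k0 : ℕ, 1 ≤ k0 ∧ 0 < p k0 := by
    by_contra hcon
    push_neg at hcon
    have hz : ∀ k : ℕ, k ≠ 0 → p k = 0 := by
      intro k hk
      have := hcon k (by omega)
      exact le_antisymm this (hp k)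
    have : (∑' k : ℕ, p k) = p 0 := tsum_eq_single 0 hz
    rw [hpsum.tsum_eq] at this
    linarith
  obtain ⟨k0, hk01, hk0pos⟩ := hk0
  -- strict antitonicity of F on [0,1]
  have hFanti : ∀ x y : ℝ, 0 ≤ x → y ≤ 1 → x < y → F y < F x := by
    intro x y hx0 hy1 hxy
    have hx1 : x ≤ 1 := le_of_lt (lt_of_lt_of_le hxy hy1)
    have hy0 : 0 ≤ y := le_trans hx0 (le_of_lt hxy)
    obtain ⟨hgx0, hgx1⟩ := hg01 x hx0 hx1
    obtain ⟨hgy0, hgy1⟩ := hg01 y hy0 hy1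
    have hglt : g y < g x := by simp only [hg]; nlinarith
    rw [hF, hF]
    apply Summable.tsum_lt_tsum (i := k0)
    · intro k
      apply mul_le_mul_of_nonneg_right _ (hp k)
      exact pow_le_pow_left₀ hgy0 (le_of_lt hglt) k
    · apply mul_lt_mul_of_pos_right _ hk0pos
      exact pow_lt_pow_left₀ hglt hgy0 (by omega)
    · exact hsum y hy0 hy1
    · exact hsum x hx0 hx1
  -- conclude
  have h1N : h + 1 < N := by omega
  have hhN : h < N := by omega
  have e1 : P h = F (P (h + 1)) := hPrec h hhN
  have e2 : P (h + 1) = F (P (h + 2)) := hPrec (h + 1) h1N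
  obtain ⟨hP1a, hP1b⟩ := hPmem (h + 1) (by omega)
  obtain ⟨hP2a, hP2b⟩ := hPmem (h + 2) hh
  constructor
  · intro hlt
    have := hFanti (P (h + 1)) (P (h + 2)) hP1a hP2b hlt
    rw [← e1, ← e2] at this
    exact this
  · intro hlt
    have := hFanti (P (h + 2)) (P (h + 1)) hP2a hP1b hlt
    rw [← e1, ← e2] at this
    exact this
end

section
/- Suppose the bipolar argumentation framework ⟨A, R_sup, R_att⟩ is a reply tree, i.e. the union relation E := R_sup ∪ R_att is such that every element of A has at most one E-successor and the transitive closure of E is irreflexive. Then every pair (a,b) in the derived attack relation R lies in the transitive closure of E (b is a proper E-ancestor of a); consequently R is irreflexive and its transitive closure is irreflexive, i.e. the derived argumentation framework ⟨A, R⟩ is acyclic. -/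
theorem stmt_13 {α : Type*} (Rsup Ratt : α → α → Prop)
    (hdisj : ∀ a b, ¬(Rsup a b ∧ Ratt a b))
    (E : α → α → Prop) (hE : ∀ a b, E a b ↔ Rsup a b ∨ Ratt a b)
    (R : α → α → Prop)
    (hR : ∀ a b, R a b ↔
      (∃ c, Relation.ReflTransGen Rsup a c ∧ Ratt c b) ∨
      (∃ c, Ratt a c ∧ Relation.ReflTransGen Rsup c b))
    (htree : ∀ a b c, E a b → E a c → b = c)
    (hacyclic : ∀ a, ¬ Relation.TransGen E a a) :
    (∀ a b, R a b → Relation.TransGen E a b) ∧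
    (∀ a, ¬ R a a) ∧
    (∀ a, ¬ Relation.TransGen R a a) := by
  have hsupE : ∀ a b, Relation.ReflTransGen Rsup a b → Relation.ReflTransGen E a b := by
    intro a b h
    exact Relation.ReflTransGen.mono (fun x y hxy => (hE x y).mpr (Or.inl hxy)) _ _ h
  have h1 : ∀ a b, R a b → Relation.TransGen E a b := by
    intro a b hab
    rcases (hR a b).mp hab with ⟨c, hac, hcb⟩ | ⟨c, hac, hcb⟩
    · exact Relation.TransGen.tail' (hsupE a c hac) ((hE c b).mpr (Or.inr hcb))
    · exact Relation.TransGen.head' ((hE a c).mpr (Or.inr hac)) (hsupE c b hcb)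
  have h2 : ∀ a b, Relation.TransGen R a b → Relation.TransGen E a b := by
    intro a b h
    induction h with
    | single hxy => exact h1 _ _ hxy
    | tail _ hxy ih => exact ih.trans (h1 _ _ hxy)
  have h3 : ∀ a, ¬ Relation.TransGen R a a := fun a h => hacyclic a (h2 a a h)
  exact ⟨h1, fun a ha => h3 a (Relation.TransGen.single ha), h3⟩
end
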